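/- (Metzler property of Z − Y·W⁻¹·X under Condition 3) Let σ_i, γ_a, γ_h, δ_h, β_a, β_i, β_h > 0, c12 > 0, r ∈ (0,1), q ∈ (0,1), θ_l ∈ (0,1], and assume rβ_i θ_l / σ_i + (1−r)β_a θ_l / γ_a < 1. With W = [[d − σ_i, c12 + d], [0, −c12 − σ_i]], X = [[e, e], [0, 0]], Y = qσ_i·I₂, Z = [[−δ_h − γ_h, c12], [0, −c12 − δ_h − γ_h]], where d = β_i γ_a r θ_l / (γ_a − (1−r)β_a θ_l) and e = β_h γ_a r θ_l / (γ_a − (1−r)β_a θ_l), the matrix Z − Y·W⁻¹·X equals [[f − γ_h − δ_h, c12 + f], [0, −c12 − δ_h − γ_h]] with f = β_h γ_a r q σ_i θ_l / (−β_i γ_a r θ_l + σ_i(γ_a − (1−r)β_a θ_l)), and this matrix is a Metzler matrix. -/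

import Mathlib

/-- A real square matrix is *Metzler* if all of its off-diagonal entries are
nonnegative. -/
def IsMetzler {n : Type*} [Fintype n] [DecidableEq n] (M : Matrix n n ℝ) : Prop :=
  ∀ i j, i ≠ j → 0 ≤ M i j

/-- **Metzler property of `Z − Y·W⁻¹·X` under Condition 3.** With the blocks `W, X, Y, Z`
of the Schur complement `S − R·P⁻¹·Q = [[W, X], [Y, Z]]` and assuming Condition 3
`rβi θl / σi + (1−r)βa θl / γa < 1`, the matrix `Z − Y·W⁻¹·X` equals
`[[f − γh − δh, c12 + f], [0, −c12 − δh − γh]]` with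
`f = βh γa r q σi θl / (−βi γa r θl + σi (γa − (1−r)βa θl))`, and this matrix is
Metzler. -/
theorem ZYWX_metzler
    (σi γa γh δh βa βi βh c12 r q θl : ℝ)
    (hσi : 0 < σi) (hγa : 0 < γa) (hγh : 0 < γh) (hδh : 0 < δh)
    (hβa : 0 < βa) (hβi : 0 < βi) (hβh : 0 < βh) (hc12 : 0 < c12)
    (hr : r ∈ Set.Ioo (0 : ℝ) 1) (hq : q ∈ Set.Ioo (0 : ℝ) 1)
    (hθl : θl ∈ Set.Ioc (0 : ℝ) 1)
    (hcond3 : r * βi * θl / σi + (1 - r) * βa * θl / γa < 1)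
    (d e f : ℝ)
    (hd : d = βi * γa * r * θl / (γa - (1 - r) * βa * θl))
    (he : e = βh * γa * r * θl / (γa - (1 - r) * βa * θl))
    (hf : f = βh * γa * r * q * σi * θl /
      (-(βi * γa * r * θl) + σi * (γa - (1 - r) * βa * θl)))
    (W X Y Z : Matrix (Fin 2) (Fin 2) ℝ)
    (hW : W = !![d - σi, c12 + d; 0, -c12 - σi])
    (hX : X = !![e, e; 0, 0])
    (hY : Y = (q * σi) • (1 : Matrix (Fin 2) (Fin 2) ℝ))
    (hZ : Z = !![-δh - γh, c12; 0, -c12 - δh - γh]) :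
    Z - Y * W⁻¹ * X = !![f - γh - δh, c12 + f; 0, -c12 - δh - γh]
      ∧ IsMetzler (!![f - γh - δh, c12 + f; 0, -c12 - δh - γh] :
          Matrix (Fin 2) (Fin 2) ℝ) := by
  obtain ⟨hr0, hr1⟩ := hr
  obtain ⟨hq0, hq1⟩ := hq
  obtain ⟨hθ0, hθ1⟩ := hθl
  -- key positivity facts
  have hD : 0 < γa - (1 - r) * βa * θl := by
    have h1 : 0 < r * βi * θl / σi := by positivity
    have h2 : (1 - r) * βa * θl / γa < 1 := by linarith
    rw [div_lt_one hγa] at h2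
    linarith
  have hDen : 0 < σi * (γa - (1 - r) * βa * θl) - βi * γa * r * θl := by
    rw [div_add_div _ _ (ne_of_gt hσi) (ne_of_gt hγa),
      div_lt_one (by positivity)] at hcond3
    nlinarith
  have ha : d - σi < 0 := by
    rw [hd, sub_neg, div_lt_iff₀ hD]; nlinarith
  have ha' : d - σi ≠ 0 := ne_of_lt ha
  have hc : -c12 - σi ≠ 0 := by nlinarith
  have hDne : γa - (1 - r) * βa * θl ≠ 0 := ne_of_gt hD
  have hDenne : -(βi * γa * r * θl) + σi * (γa - (1 - r) * βa * θl) ≠ 0 := by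
    have := hDen; intro h; nlinarith
  -- explicit inverse of W
  have hWinv : W⁻¹ = !![(d - σi)⁻¹, (c12 + d) / ((d - σi) * (c12 + σi));
      0, (-c12 - σi)⁻¹] := by
    apply Matrix.inv_eq_right_inv
    rw [hW]
    ext i j
    fin_cases i <;> fin_cases j <;>
      simp [Matrix.mul_apply, Fin.sum_univ_two, Matrix.one_apply] <;>
      field_simp <;> ring
  have hf1 : f * (d - σi) = -(q * σi * e) := by
    rw [hf, he, hd]
    generalize hDg : γa - (1 - r) * βa * θl = D at hDne hDenne ⊢
    generalize hEg : -(βi * γa * r * θl) + σi * D = E at hDenne ⊢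
    field_simp
    subst hEg
    ring
  have hf' : f = -(q * σi * e) / (d - σi) := by
    rw [eq_div_iff ha']; exact hf1
  constructor
  · rw [hZ, hY, hWinv, hX, hf']
    ext i j
    fin_cases i <;> fin_cases j <;>
      simp [Matrix.mul_apply, Fin.sum_univ_two, Matrix.one_apply, Matrix.smul_apply] <;>
      field_simp <;> ring
  · intro i j hij
    have hf0 : 0 < f := by
      rw [hf]
      exact div_pos (by positivity) (by linarith)
    clear * - hc12 hf0 hij
    fin_cases i <;> fin_cases j <;> simp_all <;> linarith
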